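/- Let K be a centered convex body in R^n (centroid at origin), A a k-dimensional affine plane, and L = A − A. Then (K ∩ A) − (K ∩ A) ⊆ (n+1)·(K ∩ L). -/

import Mathlib

open MeasureTheory Pointwise Set

/-- Minkowski's centroid bound: for a centered convex body `K` in `ℝⁿ` (n ≥ 1),
`-K ⊆ n • K`, i.e. `b ∈ K → -(1/n) • b ∈ K`. -/
theorem aux_neg_inv_smul_mem {n : ℕ} (hn : 0 < n) (K : Set (Fin n → ℝ))
    (hconv : Convex ℝ K) (hcomp : IsCompact K) (hint : (interior K).Nonempty)
    (hcent : (∫ x in K, x ∂(volume)) = (0 : Fin n → ℝ)) :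
    ∀ b ∈ K, (-(n : ℝ)⁻¹) • b ∈ K := by
  intro b hbK
  by_contra hb
  obtain ⟨f, u, hfu, huf⟩ := geometric_hahn_banach_closed_point hconv hcomp.isClosed hb
  have hKne : K.Nonempty := ⟨b, hbK⟩
  obtain ⟨x, hxK, hmin⟩ := hcomp.exists_isMinOn hKne f.continuous.continuousOn
  obtain ⟨z, hzK, hmax⟩ := hcomp.exists_isMaxOn hKne f.continuous.continuousOn
  set m := f x with hm
  set M := f z with hM
  have hmle : ∀ a ∈ K, m ≤ f a := fun a ha => hmin ha
  have hMle : ∀ a ∈ K, f a ≤ M := fun a ha => hmax ha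
  have hnR : (0:ℝ) < n := Nat.cast_pos.2 hn
  -- m + n * M < 0
  have hMu : M < u := hfu z hzK
  have hufb : u < -(n:ℝ)⁻¹ * f b := by
    have h := huf
    rwa [ContinuousLinearMap.map_smul, smul_eq_mul] at h
  have hkey : m + (n:ℝ) * M < 0 := by
    have h1 : -(n:ℝ)⁻¹ * f b ≤ -(n:ℝ)⁻¹ * m := by
      have := hmle b hbK
      nlinarith [inv_pos.2 hnR]
    have h2 : M < -(n:ℝ)⁻¹ * m := lt_of_lt_of_le (hMu.trans hufb) h1
    have h3 : (n:ℝ) * M < (n:ℝ) * (-(n:ℝ)⁻¹ * m) := by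
      exact mul_lt_mul_of_pos_left h2 hnR
    have h4 : (n:ℝ) * (-(n:ℝ)⁻¹ * m) = -m := by
      field_simp
    linarith [h3, h4 ▸ h3]
  -- integral of f over K is zero
  have hKm : MeasurableSet K := hcomp.isClosed.measurableSet
  have hIntId : IntegrableOn (fun y => y) K (volume : Measure (Fin n → ℝ)) :=
    continuous_id.continuousOn.integrableOn_compact hcomp
  have hf0 : ∫ y in K, f y ∂(volume) = 0 := by
    have := f.integral_comp_comm hIntId
    rw [this, hcent, map_zero]
  -- volume facts
  set V : ENNReal := volume K with hV
  have hV0 : 0 < V := Measure.measure_pos_of_nonempty_interior _ hint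
  have hVt : V ≠ ⊤ := hcomp.measure_lt_top.ne
  have hVr : 0 < V.toReal := ENNReal.toReal_pos hV0.ne' hVt
  -- 0 ≤ M
  have hM0 : 0 ≤ M := by
    by_contra hM0
    push_neg at hM0
    have : ∫ y in K, f y ∂(volume) ≤ ∫ _ in K, M ∂(volume) := by
      apply setIntegral_mono_on (f.continuous.continuousOn.integrableOn_compact hcomp)
        (integrableOn_const hcomp.measure_lt_top.ne) hKm hMle
    rw [hf0, setIntegral_const, smul_eq_mul, show volume.real K = V.toReal from rfl] at this
    nlinarith
  have hmM : m < M := by nlinarith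
  set D : ℝ := M - m with hD
  have hD0 : 0 < D := sub_pos.2 hmM
  -- the layer cake bound
  have f_nn : 0 ≤ᵐ[volume.restrict K] fun y => M - f y :=
    (ae_restrict_mem hKm).mono fun y hy => sub_nonneg.2 (hMle y hy)
  have f_mble : AEMeasurable (fun y => M - f y) (volume.restrict K) :=
    (measurable_const.sub f.continuous.measurable).aemeasurable
  have hIntMf : IntegrableOn (fun y => M - f y) K (volume : Measure (Fin n → ℝ)) :=
    (continuous_const.sub f.continuous).continuousOn.integrableOn_compact hcomp
  have layer := lintegral_eq_lintegral_meas_le (volume.restrict K) f_nn f_mble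
  -- cone bound for each t
  have key : ∀ t ∈ Set.Ioo (0:ℝ) D,
      ENNReal.ofReal ((1 - t/D)^n) * V ≤ (volume.restrict K) {a | t ≤ M - f a} := by
    intro t ht
    set c : ℝ := 1 - t / D with hc
    have hc0 : 0 < c := by
      have h := (div_lt_one hD0).2 ht.2
      rw [hc]; linarith
    have hc1 : c ≤ 1 := by
      have h := div_pos ht.1 hD0
      rw [hc]; linarith
    set S : Set (Fin n → ℝ) := AffineMap.homothety x c '' K with hS
    have hSK : S ⊆ K := by
      rintro _ ⟨y, hy, rfl⟩
      have : AffineMap.homothety x c y = c • y + (1 - c) • x := by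
        simp [AffineMap.homothety_apply, smul_sub, sub_smul]
        abel
      rw [this]
      exact hconv hy hxK hc0.le (by linarith) (by ring)
    have hSle : ∀ s ∈ S, t ≤ M - f s := by
      rintro _ ⟨y, hy, rfl⟩
      have hfy : f (AffineMap.homothety x c y) = c * f y + (1 - c) * m := by
        simp only [AffineMap.homothety_apply, vsub_eq_sub, vadd_eq_add, f.map_add,
          f.map_smul, f.map_sub, smul_eq_mul, hm]
        ring
      have h1 : f y ≤ M := hMle y hy
      have h2 : c * (M - m) = D - t := by
        have : (t / D) * D = t := div_mul_cancel₀ t hD0.ne'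
        simp only [hc]; rw [sub_mul, one_mul, this, hD]
      have : f (AffineMap.homothety x c y) ≤ M - t := by
        rw [hfy]; nlinarith
      linarith
    have hvolS : volume S = ENNReal.ofReal (c ^ n) * V := by
      rw [hS, Measure.addHaar_image_homothety, Module.finrank_fin_fun, abs_of_nonneg (by positivity)]
    calc ENNReal.ofReal ((1 - t/D)^n) * V = volume S := hvolS.symm
      _ ≤ volume ({a | t ≤ M - f a} ∩ K) :=
          measure_mono fun s hs => ⟨hSle s hs, hSK hs⟩
      _ = (volume.restrict K) {a | t ≤ M - f a} := (Measure.restrict_apply' hKm).symm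
  -- compute the explicit integral
  have hcalc : ∫ t in Ioo (0:ℝ) D, (1 - t/D)^n = D / (n+1) := by
    rw [← integral_Ioc_eq_integral_Ioo, ← intervalIntegral.integral_of_le hD0.le]
    have h1 : (∫ t in (0:ℝ)..D, (1 - t/D)^n) = D • ∫ u in (0/D:ℝ)..(D/D), (1-u)^n :=
      intervalIntegral.integral_comp_div (a := 0) (b := D) (fun u => (1-u)^n) hD0.ne'
    rw [h1, zero_div, div_self hD0.ne']
    rw [intervalIntegral.integral_comp_sub_left (fun u => u^n) 1]
    norm_num [integral_pow]
    ring
  have hIoo : IntegrableOn (fun t => (1 - t/D)^n) (Ioo (0:ℝ) D) volume :=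
    (((continuous_const.sub (continuous_id.div_const D)).pow n).continuousOn.integrableOn_compact
      isCompact_Icc).mono_set Ioo_subset_Icc_self
  have g_nn : 0 ≤ᵐ[volume.restrict (Ioo (0:ℝ) D)] fun t => (1 - t/D)^n :=
    (ae_restrict_mem measurableSet_Ioo).mono fun t ht => by
      have h : t / D ≤ 1 := ((div_lt_one hD0).2 ht.2).le
      exact pow_nonneg (by linarith) n
  -- main chain
  have main : ENNReal.ofReal (D/(n+1) * V.toReal) ≤ ENNReal.ofReal (∫ y in K, (M - f y) ∂volume) := by
    calc ENNReal.ofReal (D/(n+1) * V.toReal)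
        = ENNReal.ofReal (D/(n+1)) * V := by
          rw [ENNReal.ofReal_mul (by positivity), ENNReal.ofReal_toReal hVt]
      _ = (∫⁻ t in Ioo (0:ℝ) D, ENNReal.ofReal ((1 - t/D)^n)) * V := by
          rw [← ofReal_integral_eq_lintegral_ofReal hIoo g_nn, hcalc]
      _ = ∫⁻ t in Ioo (0:ℝ) D, ENNReal.ofReal ((1 - t/D)^n) * V := by
          rw [lintegral_mul_const _ (by fun_prop)]
      _ ≤ ∫⁻ t in Ioo (0:ℝ) D, (volume.restrict K) {a | t ≤ M - f a} := by
          apply lintegral_mono_ae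
          exact (ae_restrict_mem measurableSet_Ioo).mono fun t ht => key t ht
      _ ≤ ∫⁻ t in Ioi (0:ℝ), (volume.restrict K) {a | t ≤ M - f a} :=
          lintegral_mono_set Ioo_subset_Ioi_self
      _ = ∫⁻ y, ENNReal.ofReal (M - f y) ∂(volume.restrict K) := layer.symm
      _ = ENNReal.ofReal (∫ y in K, (M - f y) ∂volume) :=
          (ofReal_integral_eq_lintegral_ofReal hIntMf f_nn).symm
  have hIntRHS : ∫ y in K, (M - f y) ∂volume = M * V.toReal := by
    rw [integral_sub (integrableOn_const (C := M) hcomp.measure_lt_top.ne) 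
      (f.continuous.continuousOn.integrableOn_compact hcomp), hf0, setIntegral_const, show volume.real K = V.toReal from rfl]
    simp [smul_eq_mul, mul_comm]
  rw [hIntRHS] at main
  have hfin : D/(n+1) * V.toReal ≤ M * V.toReal := by
    rwa [ENNReal.ofReal_le_ofReal_iff (by positivity)] at main
  have : D / (n+1) ≤ M := le_of_mul_le_mul_right hfin hVr
  have hnn : (0:ℝ) < (n:ℝ) + 1 := by positivity
  rw [div_le_iff₀ hnn] at this
  nlinarith

theorem section_difference_subset_of_centered {n k : ℕ} (K : Set (Fin n → ℝ))
    (hconv : Convex ℝ K) (hcomp : IsCompact K) (hint : (interior K).Nonempty)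
    (hcent : (∫ x in K, x ∂(volume)) = (0 : Fin n → ℝ))
    (L : Submodule ℝ (Fin n → ℝ)) (hk : Module.finrank ℝ L = k)
    (t : Fin n → ℝ) (A : Set (Fin n → ℝ)) (hA : A = t +ᵥ (L : Set (Fin n → ℝ))) :
    (K ∩ A) - (K ∩ A) ⊆ ((n : ℝ) + 1) • (K ∩ (L : Set (Fin n → ℝ))) := by
  rintro z hz
  rw [Set.mem_sub] at hz
  obtain ⟨a, ⟨haK, haA⟩, b, ⟨hbK, hbA⟩, rfl⟩ := hz
  have habL : a - b ∈ L := by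
    rw [hA] at haA hbA
    obtain ⟨la, hla, rfl⟩ := haA
    obtain ⟨lb, hlb, rfl⟩ := hbA
    have : (t +ᵥ la) - (t +ᵥ lb) = la - lb := by
      simp only [vadd_eq_add]; abel
    rw [this]
    exact sub_mem hla hlb
  have hn1 : ((n:ℝ) + 1) ≠ 0 := by positivity
  rcases Nat.eq_zero_or_pos n with hn | hn
  · subst hn
    have hzero : ∀ v : Fin 0 → ℝ, v = 0 := fun v => funext fun i => i.elim0
    obtain ⟨w, hw⟩ := hint
    have hwK : w ∈ K := interior_subset hw
    refine ⟨0, ⟨?_, L.zero_mem⟩, by simp [hzero (a-b)]⟩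
    rw [← hzero w]; exact hwK
  · have hneg := aux_neg_inv_smul_mem hn K hconv hcomp hint hcent b hbK
    have hwK : ((n:ℝ)+1)⁻¹ • (a - b) ∈ K := by
      have hcomb := hconv haK hneg
        (a := ((n:ℝ)+1)⁻¹) (b := (n:ℝ)/((n:ℝ)+1))
        (by positivity) (by positivity) (by field_simp; ring)
      have heq : ((n:ℝ)+1)⁻¹ • (a - b)
          = ((n:ℝ)+1)⁻¹ • a + ((n:ℝ)/((n:ℝ)+1)) • ((-(n:ℝ)⁻¹) • b) := by
        have hnR : ((n:ℝ)) ≠ 0 := Nat.cast_ne_zero.2 hn.ne'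
        match_scalars <;> field_simp <;> ring
      rw [heq]
      exact hcomb
    refine ⟨((n:ℝ)+1)⁻¹ • (a - b), ⟨hwK, L.smul_mem _ habL⟩, ?_⟩
    show ((n:ℝ)+1) • (((n:ℝ)+1)⁻¹ • (a - b)) = a - b
    rw [smul_smul, mul_inv_cancel₀ hn1, one_smul]
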